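/- Let D be an integral domain with quotient field K, ⋆ a semistar operation on D, and T an overring of D. Then the map ℓ = ℓ_{⋆,T}, defined by E^{ℓ} := ∩{E T_{D∖P} : P a quasi-⋆_f-prime ideal of D} for each nonzero T-submodule E of K, is a semistar operation on T, and it is stable: (E ∩ F)^{ℓ} = E^{ℓ} ∩ F^{ℓ} for all nonzero T-submodules E, F of K. -/

import Mathlib

open Pointwise

/-! Basic framework for semistar operations on an integral domain `D`
with quotient field `K`. Submodules of `K` play the role of the
`D`-submodules of the quotient field. -/

section Generic

variable (R : Type*) (K : Type*) [CommRing R] [Field K] [Algebra R K]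

/-- A semistar operation on `R` (with ambient field `K`): a map on the nonzero
`R`-submodules of `K` satisfying (⋆₁), (⋆₂), (⋆₃). The map is total on
`Submodule R K`, but the axioms are only imposed on nonzero submodules. -/
structure SemistarOp where
  toFun : Submodule R K → Submodule R K
  smul' : ∀ x : K, x ≠ 0 → ∀ E : Submodule R K, E ≠ ⊥ → toFun (x • E) = x • toFun E
  mono' : ∀ E F : Submodule R K, E ≠ ⊥ → F ≠ ⊥ → E ≤ F → toFun E ≤ toFun F
  le_star' : ∀ E : Submodule R K, E ≠ ⊥ → E ≤ toFun E
  idem' : ∀ E : Submodule R K, E ≠ ⊥ → toFun (toFun E) = toFun E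

variable {R K}

/-- The `R`-submodule of `K` generated by (the image of) an ideal of `R`. -/
def idealSub (I : Ideal R) : Submodule R K := Submodule.map (Algebra.linearMap R K) I

/-- The finite-type operation `⋆_f` associated to (the function underlying) a semistar
operation: `E^{⋆_f} = ∪ { F^⋆ : F nonzero finitely generated, F ⊆ E }`. -/
def starF (f : Submodule R K → Submodule R K) (E : Submodule R K) : Submodule R K :=
  sSup {G | ∃ F : Submodule R K, F.FG ∧ F ≠ ⊥ ∧ F ≤ E ∧ G = f F}

/-- `I` is a quasi-⋆-ideal: `I ≠ 0` and `I^⋆ ∩ R = I`. -/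
def QuasiIdeal (f : Submodule R K → Submodule R K) (I : Ideal R) : Prop :=
  I ≠ ⊥ ∧ Submodule.comap (Algebra.linearMap R K) (f (idealSub I)) = I

/-- `I` is a quasi-⋆-prime: a prime quasi-⋆-ideal. -/
def QuasiPrime (f : Submodule R K → Submodule R K) (I : Ideal R) : Prop :=
  QuasiIdeal f I ∧ I.IsPrime

/-- `I` is a quasi-⋆-maximal: maximal among proper quasi-⋆-ideals. -/
def QuasiMax (f : Submodule R K → Submodule R K) (I : Ideal R) : Prop :=
  QuasiIdeal f I ∧ I ≠ ⊤ ∧ ∀ J : Ideal R, QuasiIdeal f J → J ≠ ⊤ → I ≤ J → I = J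

/-- The localization `E·R_Q` of a submodule `E` of `K` at (the complement of) `Q`:
for prime `Q` this is `{x ∈ K : s·x ∈ E for some s ∉ Q}`. -/
def locSub (Q : Ideal R) (E : Submodule R K) : Submodule R K :=
  Submodule.span R {x : K | ∃ s : R, s ∉ Q ∧ algebraMap R K s * x ∈ E}

/-- The spectral semistar operation `⋆̃` associated to `⋆`:
`E^{⋆̃} = ∩ { E R_Q : Q quasi-⋆_f-maximal }` (equal to `K` if there are none). -/
def tildeOp (f : Submodule R K → Submodule R K) (E : Submodule R K) : Submodule R K :=
  ⨅ (Q : Ideal R) (_ : QuasiMax (starF f) Q), locSub Q E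

/-- The `v`-operation `E ↦ (R :_K (R :_K E))`. -/
def vOp (E : Submodule R K) : Submodule R K := 1 / (1 / E)

/-- The `t`-operation: the finite-type operation associated to `v`. -/
def tOp : Submodule R K → Submodule R K := starF (vOp (R := R) (K := K))

/-- `R` is a Prüfer ⋆-multiplication domain: every nonzero finitely generated ideal `F`
is ⋆_f-invertible, i.e. `(F·(R :_K F))^{⋆_f} = R^⋆`. -/
def PSMD (f : Submodule R K → Submodule R K) : Prop :=
  ∀ F : Ideal R, F ≠ ⊥ → F.FG →
    starF f (idealSub F * ((1 : Submodule R K) / idealSub F)) = f 1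

/-- The content ideal of a polynomial: the ideal generated by its coefficients. -/
def contentI (h : Polynomial R) : Ideal R := Ideal.span (Set.range h.coeff)

/-- The Nagata ring `Na(R,⋆) = R[X]_{N(⋆)}`, realized as the subset
`{g/h : g, h ∈ R[X], h ≠ 0, c(h)^⋆ = R^⋆}` of the field `K(X)` of rational functions. -/
def NaSet (f : Submodule R K → Submodule R K) : Set (RatFunc K) :=
  {x | ∃ g h : Polynomial R, h ≠ 0 ∧ f (idealSub (contentI h)) = f 1 ∧
    x * algebraMap (Polynomial K) (RatFunc K) (h.map (algebraMap R K)) =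
      algebraMap (Polynomial K) (RatFunc K) (g.map (algebraMap R K))}

/-- The Nagata ring as a subring of `K(X)` (the set `NaSet` is multiplicatively
saturated, so it coincides with the subring it generates). -/
noncomputable def NaSub (f : Submodule R K → Submodule R K) : Subring (RatFunc K) :=
  Subring.closure (NaSet f)

/-- A subset `S` of `K` is integrally closed (in `K`) if every element of `K` which is a root
of a monic polynomial with coefficients in `S` lies in `S`. -/
def IntClosedSet (S : Set K) : Prop :=
  ∀ x : K, (∃ p : Polynomial K, p.Monic ∧ (∀ n, p.coeff n ∈ S) ∧ p.eval x = 0) → x ∈ S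

/-- A subset `S` of `K` is seminormal if `x² ∈ S` and `x³ ∈ S` imply `x ∈ S`. -/
def SeminormalSet (S : Set K) : Prop := ∀ x : K, x ^ 2 ∈ S → x ^ 3 ∈ S → x ∈ S

/-- `T` is `(f,g)`-linked to `T` (case `D = T` of linkedness). -/
def LinkedSelf (f g : Submodule R K → Submodule R K) : Prop :=
  ∀ G : Ideal R, G ≠ ⊥ → G.FG → f (idealSub G) = f 1 → g (idealSub G) = g 1

end Generic

section Overring

variable {D : Type*} {K : Type*} [CommRing D] [Field K] [Algebra D K]

/-- The `T`-submodule `E·T` of `K` generated by a `D`-submodule `E` of `K`. -/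
def extT (T : Subalgebra D K) (E : Submodule D K) : Submodule ↥T K :=
  Submodule.span ↥T (E : Set K)

/-- `T` is `(⋆,⋆')`-linked to `D`: for every nonzero finitely generated integral ideal `F`
of `D`, `F^⋆ = D^⋆` implies `(FT)^{⋆'} = T^{⋆'}`. -/
def LinkedF (f : Submodule D K → Submodule D K) (T : Subalgebra D K)
    (g : Submodule ↥T K → Submodule ↥T K) : Prop :=
  ∀ F : Ideal D, F ≠ ⊥ → F.FG → f (idealSub F) = f 1 → g (extT T (idealSub F)) = g 1

/-- `T` is `t`-linked to `(D,⋆)`: `T` is `(⋆, t_T)`-linked to `D`. -/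
def TLinked (f : Submodule D K → Submodule D K) (T : Subalgebra D K) : Prop :=
  LinkedF f T (tOp (R := ↥T) (K := K))

/-- The semistar operation `ℓ_{⋆,T}` on `T`:
`E^ℓ = ∩ { E T_{D∖P} : P quasi-⋆_f-prime of D }` (equal to `K` if there are none). -/
def ellOp (f : Submodule D K → Submodule D K) (T : Subalgebra D K)
    (E : Submodule ↥T K) : Submodule ↥T K :=
  ⨅ (P : Ideal D) (_ : QuasiPrime (starF f) P),
    Submodule.span ↥T {x : K | ∃ r : D, r ∉ P ∧ algebraMap D K r * x ∈ E}

/-- The localization `D_P` of `D` at a prime `P`, as a subalgebra of `K`. -/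
def Dloc (P : Ideal D) : Subalgebra D K :=
  Algebra.adjoin D {x : K | ∃ r : D, r ∉ P ∧ algebraMap D K r * x ∈ (⊥ : Subalgebra D K)}

/-- The localization `T_{D∖P}` of an overring `T` at the multiplicative set `D∖P`,
as a subalgebra of `K`. -/
def TlocD (T : Subalgebra D K) (P : Ideal D) : Subalgebra D K :=
  Algebra.adjoin D {x : K | ∃ r : D, r ∉ P ∧ algebraMap D K r * x ∈ T}

/-- The localization `T_Q` of an overring `T` at a prime `Q` of `T`,
as a subalgebra of `K`. -/
def TlocQ (T : Subalgebra D K) (Q : Ideal ↥T) : Subalgebra D K :=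
  Algebra.adjoin D {x : K | ∃ t : ↥T, t ∉ Q ∧ (t : K) * x ∈ T}

/-- `T` is `(⋆,⋆')`-flat over `D`: `T` is `(⋆,⋆')`-linked to `D` and `D_{Q∩D} = T_Q`
for every quasi-⋆'_f-prime `Q` of `T`. -/
def FlatF (f : Submodule D K → Submodule D K) (T : Subalgebra D K)
    (g : Submodule ↥T K → Submodule ↥T K) : Prop :=
  LinkedF f T g ∧
    ∀ Q : Ideal ↥T, QuasiPrime (starF g) Q →
      Dloc (Q.comap (algebraMap D ↥T)) = TlocQ T Q

/-- `B` is a flat `A`-module (for subalgebras `A ⊆ B` of `K`, with the module structure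
coming from the inclusion). -/
def FlatPair (A B : Subalgebra D K) : Prop :=
  ∃ h : A ≤ B, @Module.Flat ↥A ↥B _ _ ((Subalgebra.inclusion h).toRingHom.toModule)

/-- `B` is a flat `A`-module, for subrings `A ⊆ B` of a commutative ring. -/
def FlatSubring {L : Type*} [CommRing L] (A B : Subring L) : Prop :=
  ∃ h : A ≤ B, @Module.Flat ↥A ↥B _ _ ((Subring.inclusion h).toModule)

end Overring


section EllAux

variable {D : Type*} {K : Type*} [CommRing D] [Field K] [Algebra D K]

/-- The set defining the localization is itself a `T`-submodule when `P` is prime. -/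
def locMod (T : Subalgebra D K) (P : Ideal D) (hP : P.IsPrime) (E : Submodule ↥T K) :
    Submodule ↥T K where
  carrier := {x : K | ∃ r : D, r ∉ P ∧ algebraMap D K r * x ∈ E}
  add_mem' := by
    rintro a b ⟨r, hr, hrE⟩ ⟨q, hq, hqE⟩
    refine ⟨r * q, fun h => ((hP.mem_or_mem h).elim hr hq), ?_⟩
    have h1 : algebraMap D K (r * q) * (a + b)
        = algebraMap D K q * (algebraMap D K r * a)
          + algebraMap D K r * (algebraMap D K q * b) := by
      rw [map_mul]; ring
    rw [h1]
    refine E.add_mem ?_ ?_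
    · have := E.smul_mem (⟨algebraMap D K q, T.algebraMap_mem q⟩ : ↥T) hrE
      simpa [Algebra.smul_def] using this
    · have := E.smul_mem (⟨algebraMap D K r, T.algebraMap_mem r⟩ : ↥T) hqE
      simpa [Algebra.smul_def] using this
  zero_mem' := by
    refine ⟨1, ?_, by simp⟩
    exact (Ideal.ne_top_iff_one P).mp hP.ne_top
  smul_mem' := by
    rintro t a ⟨r, hr, hrE⟩
    refine ⟨r, hr, ?_⟩
    have h1 : algebraMap D K r * (t • a) = t • (algebraMap D K r * a) := by
      simp only [Algebra.smul_def]; ring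
    rw [h1]
    exact E.smul_mem t hrE

lemma mem_smul_pt (T : Subalgebra D K) (x : K) (E : Submodule ↥T K) (z : K) :
    z ∈ x • E ↔ ∃ m ∈ E, x • m = z := by
  rw [← SetLike.mem_coe, Submodule.coe_pointwise_smul, Set.mem_smul_set]
  simp

lemma mem_ellOp_iff (f : Submodule D K → Submodule D K) (T : Subalgebra D K)
    (E : Submodule ↥T K) (z : K) :
    z ∈ ellOp f T E ↔ ∀ P : Ideal D, ∀ _ : QuasiPrime (starF f) P,
      ∃ r : D, r ∉ P ∧ algebraMap D K r * z ∈ E := by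
  simp only [ellOp, Submodule.mem_iInf]
  refine forall_congr' fun P => forall_congr' fun hP => ?_
  have hspan : Submodule.span ↥T {x : K | ∃ r : D, r ∉ P ∧ algebraMap D K r * x ∈ E}
      = locMod T P hP.2 E := by
    apply Submodule.span_eq (locMod T P hP.2 E)
  rw [hspan]
  rfl

end EllAux

/-- **Proposition 3.10 (1).** The map `ℓ = ℓ_{⋆,T}` is a (stable) semistar operation on
`T`: it satisfies (⋆₁), (⋆₂), (⋆₃), and `(E ∩ F)^ℓ = E^ℓ ∩ F^ℓ`. -/
theorem ellOp_is_stable_semistar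
    {D K : Type*} [CommRing D] [IsDomain D] [Field K] [Algebra D K] [IsFractionRing D K]
    (s : SemistarOp D K) (T : Subalgebra D K) :
    (∀ x : K, x ≠ 0 → ∀ E : Submodule ↥T K, E ≠ ⊥ →
        ellOp s.toFun T (x • E) = x • ellOp s.toFun T E) ∧
    (∀ E F : Submodule ↥T K, E ≠ ⊥ → F ≠ ⊥ → E ≤ F →
        ellOp s.toFun T E ≤ ellOp s.toFun T F) ∧
    (∀ E : Submodule ↥T K, E ≠ ⊥ → E ≤ ellOp s.toFun T E) ∧
    (∀ E : Submodule ↥T K, E ≠ ⊥ →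
        ellOp s.toFun T (ellOp s.toFun T E) = ellOp s.toFun T E) ∧
    (∀ E F : Submodule ↥T K, E ≠ ⊥ → F ≠ ⊥ →
        ellOp s.toFun T (E ⊓ F) = ellOp s.toFun T E ⊓ ellOp s.toFun T F) := by
  set f := s.toFun with hf
  have hm : ∀ (E : Submodule ↥T K) (z : K), z ∈ ellOp f T E ↔
      ∀ P : Ideal D, ∀ _ : QuasiPrime (starF f) P,
        ∃ r : D, r ∉ P ∧ algebraMap D K r * z ∈ E := fun E z => mem_ellOp_iff f T E z
  have hle : ∀ E : Submodule ↥T K, E ≤ ellOp f T E := by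
    intro E z hz
    rw [hm]
    intro P hP
    exact ⟨1, (Ideal.ne_top_iff_one P).mp hP.2.ne_top, by simpa using hz⟩
  have hmono : ∀ E F : Submodule ↥T K, E ≤ F → ellOp f T E ≤ ellOp f T F := by
    intro E F hEF z hz
    rw [hm] at hz ⊢
    intro P hP
    obtain ⟨r, hr, hrE⟩ := hz P hP
    exact ⟨r, hr, hEF hrE⟩
  refine ⟨?_, fun E F _ _ h => hmono E F h, fun E _ => hle E, ?_, ?_⟩
  · -- smul
    intro x hx E _
    ext z
    rw [hm, mem_smul_pt]
    constructor
    · intro h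
      refine ⟨x⁻¹ * z, ?_, by rw [smul_eq_mul, ← mul_assoc, mul_inv_cancel₀ hx, one_mul]⟩
      rw [hm]
      intro P hP
      obtain ⟨r, hr, hrE⟩ := h P hP
      rw [mem_smul_pt] at hrE
      obtain ⟨m, hm', hxm⟩ := hrE
      refine ⟨r, hr, ?_⟩
      have : algebraMap D K r * (x⁻¹ * z) = m := by
        rw [smul_eq_mul] at hxm
        field_simp
        linear_combination -hxm
      rwa [this]
    · rintro ⟨m, hmem, rfl⟩
      rw [hm] at hmem
      intro P hP
      obtain ⟨r, hr, hrE⟩ := hmem P hP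
      refine ⟨r, hr, ?_⟩
      rw [mem_smul_pt]
      exact ⟨algebraMap D K r * m, hrE, by simp only [smul_eq_mul]; ring⟩
  · -- idempotent
    intro E _
    refine le_antisymm ?_ (hle _)
    intro z hz
    rw [hm] at hz ⊢
    intro P hP
    obtain ⟨r, hr, hrE⟩ := hz P hP
    rw [hm] at hrE
    obtain ⟨q, hq, hqE⟩ := hrE P hP
    refine ⟨q * r, fun h => ((hP.2.mem_or_mem h).elim hq hr), ?_⟩
    rwa [map_mul, mul_assoc]
  · -- stable
    intro E F _ _
    refine le_antisymm (le_inf (hmono _ _ inf_le_left) (hmono _ _ inf_le_right)) ?_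
    rintro z ⟨hzE, hzF⟩
    have hzE' := (hm E z).mp hzE
    have hzF' := (hm F z).mp hzF
    rw [hm]
    intro P hP
    obtain ⟨r, hr, hrE⟩ := hzE' P hP
    obtain ⟨q, hq, hqF⟩ := hzF' P hP
    refine ⟨r * q, fun h => ((hP.2.mem_or_mem h).elim hr hq), ?_, ?_⟩
    · have h1 : algebraMap D K (r * q) * z
          = algebraMap D K q * (algebraMap D K r * z) := by rw [map_mul]; ring
      rw [h1]
      have := E.smul_mem (⟨algebraMap D K q, T.algebraMap_mem q⟩ : ↥T) hrE
      simpa [Algebra.smul_def] using this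
    · have h1 : algebraMap D K (r * q) * z
          = algebraMap D K r * (algebraMap D K q * z) := by rw [map_mul]; ring
      rw [h1]
      have := F.smul_mem (⟨algebraMap D K r, T.algebraMap_mem r⟩ : ↥T) hqF
      simpa [Algebra.smul_def] using this
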